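/- Let d ≥ 1, let B and Λ be finite sets, let M : B → Matrix (Fin d) (Fin d) ℂ be a POVM (each M_b positive semidefinite, ∑_b M_b = 1), let D : Λ → B → ℝ, let G : Λ → Matrix (Fin d) (Fin d) ℂ, let X : B → Matrix (Fin d) (Fin d) ℂ with each X_b Hermitian, and let η ∈ ℝ with η ≤ 1. Assume: (a) each G_λ is positive semidefinite and ∑_λ D_λ(b) • G_λ = η • M_b + (1−η) • (Tr(M_b)/d) • 1 for every b ∈ B; (b) for every λ, the matrix ∑_b D_λ(b) • X_b is positive semidefinite; (c) (1/d) ∑_b Tr(X_b) Tr(M_b) ≤ 1 + ∑_b Tr(X_b M_b), where all the traces appearing are real numbers since M_b, G_λ are positive semidefinite and X_b is Hermitian. Then η ≤ 1 + ∑_b Tr(X_b M_b). (This is the weak semidefinite-programming duality bound on the white-noise robustness of a measurement: every feasible solution of the dual program upper-bounds the noise parameter of any classically simulable noisy version of M.) -/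

import Mathlib

open Matrix BigOperators
open scoped ComplexOrder

noncomputable section

lemma trace_nonneg_of_psd {n : Type*} [Fintype n] [DecidableEq n] {A : Matrix n n ℂ}
    (hA : A.PosSemidef) : 0 ≤ A.trace := by
  rw [Matrix.trace]
  apply Finset.sum_nonneg
  intro i _
  exact hA.diag_nonneg

open scoped MatrixOrder in
lemma trace_mul_nonneg_of_psd {n : Type*} [Fintype n] [DecidableEq n]
    {A B : Matrix n n ℂ} (hA : A.PosSemidef) (hB : B.PosSemidef) :
    0 ≤ (A * B).trace := by
  have h1 : A * B = A * (CFC.sqrt B * CFC.sqrt B) := by rw [CFC.sqrt_mul_sqrt_self B hB.nonneg]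
  have h2 : (A * (CFC.sqrt B * CFC.sqrt B)).trace = (CFC.sqrt B * A * CFC.sqrt B).trace := by
    rw [← Matrix.mul_assoc, Matrix.trace_mul_cycle]
  have h3 : (CFC.sqrt B * A * CFC.sqrt B).PosSemidef := by
    have := hA.mul_mul_conjTranspose_same (CFC.sqrt B)
    rwa [(CFC.sqrt_nonneg B).posSemidef.1.eq] at this
  rw [h1, h2]
  exact trace_nonneg_of_psd h3

lemma trace_real_of_herm {n : Type*} [Fintype n] {A : Matrix n n ℂ}
    (hA : A.IsHermitian) : A.trace = (A.trace.re : ℂ) := by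
  have : star A.trace = A.trace := by
    rw [← Matrix.trace_conjTranspose, hA.eq]
  exact (Complex.conj_eq_iff_re.mp this).symm

theorem weak_duality_white_noise_robustness
    {d : ℕ} (hd : 1 ≤ d) {B Λ : Type*} [Fintype B] [Fintype Λ]
    (M : B → Matrix (Fin d) (Fin d) ℂ)
    (hMpsd : ∀ b, (M b).PosSemidef)
    (hMnorm : ∑ b : B, M b = 1)
    (D : Λ → B → ℝ)
    (G : Λ → Matrix (Fin d) (Fin d) ℂ)
    (X : B → Matrix (Fin d) (Fin d) ℂ)
    (hXherm : ∀ b, (X b).IsHermitian)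
    (η : ℝ) (hη : η ≤ 1)
    (hGpsd : ∀ l, (G l).PosSemidef)
    (hdecomp : ∀ b : B, ∑ l : Λ, D l b • G l =
      η • M b + (1 - η) • (((M b).trace / (d : ℂ)) • (1 : Matrix (Fin d) (Fin d) ℂ)))
    (hdualfeas : ∀ l : Λ, (∑ b : B, D l b • X b).PosSemidef)
    (hdualcon : (d : ℝ)⁻¹ * ∑ b : B, ((X b).trace.re * (M b).trace.re) ≤
      1 + ∑ b : B, ((X b * M b).trace.re)) :
    η ≤ 1 + ∑ b : B, ((X b * M b).trace.re) := by
  set T : ℝ := ∑ b : B, ((X b * M b).trace.re) with hT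
  set C : ℝ := (d : ℝ)⁻¹ * ∑ b : B, ((X b).trace.re * (M b).trace.re) with hC
  -- the key positive quantity
  set S : ℂ := ∑ l : Λ, ((∑ b : B, D l b • X b) * G l).trace with hS
  have hSnonneg : (0 : ℂ) ≤ S := by
    apply Finset.sum_nonneg
    intro l _
    exact trace_mul_nonneg_of_psd (hdualfeas l) (hGpsd l)
  have hSre : 0 ≤ S.re := by
    have := hSnonneg
    rw [Complex.le_def] at this
    simpa using this.1
  -- rewrite S by swapping sums
  have hSeq : S = ∑ b : B, (X b * (∑ l : Λ, D l b • G l)).trace := by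
    rw [hS]
    simp only [Finset.sum_mul, Matrix.mul_sum, Matrix.smul_mul, Matrix.mul_smul,
      Matrix.trace_sum, Matrix.trace_smul]
    rw [Finset.sum_comm]
  have hSval : S = (η : ℂ) * (∑ b : B, (X b * M b).trace)
      + ((1 - η : ℝ) : ℂ) * ∑ b : B, ((M b).trace / (d : ℂ)) * (X b).trace := by
    rw [hSeq]
    rw [Finset.mul_sum, Finset.mul_sum, ← Finset.sum_add_distrib]
    congr 1
    ext b
    rw [hdecomp b]
    rw [Matrix.mul_add, Matrix.trace_add, Matrix.mul_smul, Matrix.mul_smul,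
      Matrix.trace_smul, Matrix.trace_smul, Matrix.mul_smul, Matrix.trace_smul]
    push_cast
    simp [Complex.real_smul, Matrix.trace_smul]
  -- real parts
  have hMre : ∀ b, (M b).trace = ((M b).trace.re : ℂ) := fun b =>
    trace_real_of_herm (hMpsd b).1
  have hXre : ∀ b, (X b).trace = ((X b).trace.re : ℂ) := fun b =>
    trace_real_of_herm (hXherm b)
  have hdpos : (0 : ℝ) < d := by exact_mod_cast hd
  have hSre_val : S.re = η * T + (1 - η) * C := by
    rw [hSval]
    simp only [Complex.add_re, Complex.mul_re, Complex.ofReal_re, Complex.ofReal_im,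
      zero_mul, sub_zero]
    have h1 : (∑ b : B, (X b * M b).trace).re = T := by
      rw [hT, Complex.re_sum]
    have h2 : (∑ b : B, ((M b).trace / (d : ℂ)) * (X b).trace) = ((C : ℝ) : ℂ) := by
      rw [hC]
      push_cast
      rw [Finset.mul_sum]
      congr 1
      ext b
      rw [hMre b, hXre b]
      push_cast
      field_simp
      simp only [Complex.ofReal_re]
      ring
    rw [h1, h2]
    simp [hC]
  have hkey : 0 ≤ η * T + (1 - η) * C := by rw [← hSre_val]; exact hSre
  have h1η : 0 ≤ 1 - η := by linarith
  have : (1 - η) * C ≤ (1 - η) * (1 + T) := mul_le_mul_of_nonneg_left hdualcon h1η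
  nlinarith

end
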